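/- Let z, w ∈ ℝ^m satisfy: (a) z_i = 0 implies w_i = 0; (b) z_i = z_j implies w_i = w_j; (c) for all i with z_i ≠ 0, 0 ≤ w_i/z_i ≤ 1; (d) for all i ≠ j with z_i ≠ z_j, 0 ≤ (w_i - w_j)/(z_i - z_j) ≤ 1. Then there exists a function φ : ℝ → ℝ that is slope-restricted in [0,1] (i.e., φ(0)=0 and 0 ≤ (φ(p)-φ(q))/(p-q) ≤ 1 for all p ≠ q) with φ(z_i) = w_i for all i = 1,…,m. -/
import Mathlib


/-- Finite data satisfying the incremental slope[0,1] conditions can be interpolated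
by a globally slope[0,1]-restricted function. -/
theorem stmt_9 {m : ℕ} (z w : Fin m → ℝ)
    (ha : ∀ i, z i = 0 → w i = 0)
    (hb : ∀ i j, z i = z j → w i = w j)
    (hc : ∀ i, z i ≠ 0 → 0 ≤ w i / z i ∧ w i / z i ≤ 1)
    (hd : ∀ i j, i ≠ j → z i ≠ z j →
      0 ≤ (w i - w j) / (z i - z j) ∧ (w i - w j) / (z i - z j) ≤ 1) :
    ∃ φ : ℝ → ℝ, φ 0 = 0 ∧
      (∀ p q : ℝ, p ≠ q → 0 ≤ (φ p - φ q) / (p - q) ∧ (φ p - φ q) / (p - q) ≤ 1) ∧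
      (∀ i, φ (z i) = w i) := by
  -- Extend the data with the origin as an extra point.
  set Z : Fin (m + 1) → ℝ := Fin.cons 0 z with hZ
  set W : Fin (m + 1) → ℝ := Fin.cons 0 w with hW
  -- Pairwise monotonicity and 1-Lipschitz conditions for the original data
  have hsign : ∀ i, (0 ≤ z i → 0 ≤ w i ∧ w i ≤ z i) ∧ (z i ≤ 0 → z i ≤ w i ∧ w i ≤ 0) := by
    intro i
    rcases eq_or_ne (z i) 0 with h | h
    · simp [h, ha i h]
    · obtain ⟨h1, h2⟩ := hc i h
      have hw : w i = (w i / z i) * z i := by field_simp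
      constructor
      · intro hz
        have hz' : 0 < z i := lt_of_le_of_ne hz (Ne.symm h)
        constructor <;> nlinarith
      · intro hz
        have hz' : z i < 0 := lt_of_le_of_ne hz h
        constructor <;> nlinarith
  have hpair : ∀ i j, z i ≤ z j → w i ≤ w j ∧ w j - w i ≤ z j - z i := by
    intro i j hij
    rcases eq_or_ne (z i) (z j) with h | h
    · have := hb i j h
      constructor <;> linarith
    · have hij' : z i < z j := lt_of_le_of_ne hij h
      have hne : i ≠ j := by rintro rfl; exact h rfl
      obtain ⟨h1, h2⟩ := hd i j hne h
      have hw : w i - w j = ((w i - w j) / (z i - z j)) * (z i - z j) :=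
        (div_mul_cancel₀ _ (sub_ne_zero.mpr h)).symm
      constructor <;> nlinarith
  -- Extended monotonicity / Lipschitz conditions
  have hmono : ∀ i j, Z i ≤ Z j → W i ≤ W j ∧ W j - W i ≤ Z j - Z i := by
    intro i j
    refine Fin.cases ?_ ?_ i <;> [skip; intro i'] <;>
      refine Fin.cases ?_ ?_ j <;> [skip; intro j'; skip; intro j'] <;>
      simp only [hZ, hW, Fin.cons_zero, Fin.cons_succ]
    · intro _; simp
    · intro h
      obtain ⟨h1, h2⟩ := (hsign j').1 h
      constructor <;> linarith
    · intro h
      obtain ⟨h1, h2⟩ := (hsign i').2 h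
      constructor <;> linarith
    · exact hpair i' j'
  classical
  -- The interpolant
  refine ⟨fun x => (Finset.univ : Finset (Fin (m + 1))).sup'
      ⟨0, Finset.mem_univ 0⟩ (fun i => min (W i) (W i + x - Z i)), ?_, ?_, ?_⟩
  · -- φ 0 = 0
    apply le_antisymm
    · apply Finset.sup'_le
      intro i _
      rcases le_total 0 (Z i) with h | h
      · have := (hmono 0 i (by simpa [hZ] using h)).2
        simp only [hZ, hW, Fin.cons_zero] at this ⊢
        exact le_trans (min_le_right _ _) (by linarith)
      · have := (hmono i 0 (by simpa [hZ] using h)).1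
        simp only [hZ, hW, Fin.cons_zero] at this ⊢
        exact le_trans (min_le_left _ _) (by linarith)
    · refine le_trans ?_ (Finset.le_sup' _ (Finset.mem_univ 0))
      simp [hZ, hW]
  · -- slope conditions
    have key : ∀ p q : ℝ, q ≤ p →
        (Finset.univ : Finset (Fin (m + 1))).sup'
          ⟨0, Finset.mem_univ 0⟩ (fun i => min (W i) (W i + q - Z i)) ≤
        (Finset.univ : Finset (Fin (m + 1))).sup'
          ⟨0, Finset.mem_univ 0⟩ (fun i => min (W i) (W i + p - Z i)) ∧
        (Finset.univ : Finset (Fin (m + 1))).sup'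
          ⟨0, Finset.mem_univ 0⟩ (fun i => min (W i) (W i + p - Z i)) ≤
        (Finset.univ : Finset (Fin (m + 1))).sup'
          ⟨0, Finset.mem_univ 0⟩ (fun i => min (W i) (W i + q - Z i)) + (p - q) := by
      intro p q hqp
      constructor
      · apply Finset.sup'_le
        intro i _
        refine le_trans ?_ (Finset.le_sup' _ (Finset.mem_univ i))
        exact min_le_min le_rfl (by linarith)
      · apply Finset.sup'_le
        intro i _
        have : min (W i) (W i + p - Z i) ≤ min (W i) (W i + q - Z i) + (p - q) := by
          rcases le_total (W i) (W i + q - Z i) with h | h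
          · rw [min_eq_left h]
            exact le_trans (min_le_left _ _) (by linarith)
          · have hle : min (W i) (W i + p - Z i) ≤ W i + p - Z i := min_le_right _ _
            rw [min_eq_right h]; linarith
        refine le_trans this ?_
        have := Finset.le_sup' (fun i => min (W i) (W i + q - Z i)) (Finset.mem_univ i)
        linarith
    intro p q hpq
    rcases lt_or_gt_of_ne hpq with h | h
    · obtain ⟨h1, h2⟩ := key q p h.le
      have hd1 : p - q < 0 := by linarith
      set A := (Finset.univ : Finset (Fin (m + 1))).sup'
          ⟨0, Finset.mem_univ 0⟩ (fun i => min (W i) (W i + p - Z i)) with hA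
      set B := (Finset.univ : Finset (Fin (m + 1))).sup'
          ⟨0, Finset.mem_univ 0⟩ (fun i => min (W i) (W i + q - Z i)) with hB
      have heq : (A - B) / (p - q) = (B - A) / (q - p) := by
        rw [← neg_div_neg_eq]; ring_nf
      rw [heq]
      constructor
      · apply div_nonneg <;> linarith
      · rw [div_le_one (by linarith : (0:ℝ) < q - p)]; linarith
    · obtain ⟨h1, h2⟩ := key p q h.le
      have hd1 : (0:ℝ) < p - q := by linarith
      constructor
      · apply div_nonneg <;> linarith
      · rw [div_le_one hd1]; linarith
  · -- interpolation
    intro i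
    have main : ∀ j : Fin (m + 1),
        (Finset.univ : Finset (Fin (m + 1))).sup'
          ⟨0, Finset.mem_univ 0⟩ (fun k => min (W k) (W k + Z j - Z k)) = W j := by
      intro j
      apply le_antisymm
      · apply Finset.sup'_le
        intro k _
        rcases le_total (Z k) (Z j) with h | h
        · exact le_trans (min_le_left _ _) (hmono k j h).1
        · have := (hmono j k h).2
          exact le_trans (min_le_right _ _) (by linarith)
      · refine le_trans ?_ (Finset.le_sup' _ (Finset.mem_univ j))
        simp
    have := main i.succ
    simpa [hZ, hW] using this
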